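/- Suppose in addition that X is irreducible and f : U → V is an isomorphism onto an open V ⊆ Z, with inverse r mapping X into itself. Let R : V_T → Z be the analogous morphism built from r. Then for every t ∈ 𝔸¹ (including t = 0), the maps f_t : U_t → Z and r_t : V_t → Z satisfy r_t ∘ f_t = id on U_t and f_t ∘ r_t = id on V_t; in particular the normal derivative f₀ is a birational transformation of Z with inverse r₀. -/

import Mathlib

/-- Evaluation of a function on Z = 𝔸^m × 𝔸¹ (a polynomial in the variables of X and
in the fiber variable `none`) at the point (x, y). -/
noncomputable def evalAt {k : Type*} [CommSemiring k] {m : ℕ}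
    (x : Fin m → k) (y : k) (p : MvPolynomial (Option (Fin m)) k) : k :=
  MvPolynomial.eval (fun v => v.elim y x) p

/-- The family of maps f_t = s_t⁻¹ ∘ f ∘ s_t of Z = 𝔸^m × 𝔸¹, for a polynomial map
f = (f_X, y·g_Y) mapping X = 𝔸^m × {0} into itself: f_t(x,y) = (f_X(x,ty), y·g_Y(x,ty)).
At t = 1 this is f itself, and at t = 0 it is the normal derivative f₀. -/
noncomputable def conjFamily {k : Type*} [CommSemiring k] {m : ℕ}
    (fX : Fin m → MvPolynomial (Option (Fin m)) k) (gY : MvPolynomial (Option (Fin m)) k)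
    (t : k) : ((Fin m → k) × k) → ((Fin m → k) × k) :=
  fun z => (fun i => evalAt z.1 (t * z.2) (fX i), z.2 * evalAt z.1 (t * z.2) gY)

lemma evalA {k : Type*} [Field k] {m : ℕ}
    (τ : Option (Fin m) → Polynomial k) (p : MvPolynomial (Option (Fin m)) k) (y : k) :
    Polynomial.eval y (MvPolynomial.aeval τ p) =
      MvPolynomial.eval (fun v => Polynomial.eval y (τ v)) p := by
  induction p using MvPolynomial.induction_on with
  | C a => simp [Polynomial.algebraMap_eq]
  | add p q hp hq => simp [hp, hq]
  | mul_X p n hp => simp [hp]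

lemma key {k : Type*} [Field k] [Infinite k] {m : ℕ}
    (fX : Fin m → MvPolynomial (Option (Fin m)) k)
    (gY hY : MvPolynomial (Option (Fin m)) k) (x : Fin m → k)
    (h : ∀ y : k, (y * evalAt x y gY) *
        evalAt (fun i => evalAt x y (fX i)) (y * evalAt x y gY) hY = y) :
    evalAt x 0 gY * evalAt (fun i => evalAt x 0 (fX i)) 0 hY = 1 := by
  set σ : Option (Fin m) → Polynomial k :=
    fun v => v.elim Polynomial.X (fun i => Polynomial.C (x i)) with hσ
  have hA : ∀ p (y : k), Polynomial.eval y (MvPolynomial.aeval σ p) = evalAt x y p := by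
    intro p y
    have hfun : (fun v => Polynomial.eval y (σ v)) = (fun v : Option (Fin m) => v.elim y x) := by
      funext v; cases v <;> simp [hσ]
    unfold evalAt; rw [evalA, hfun]
  set P1 : Polynomial k := MvPolynomial.aeval σ gY with hP1
  set τ : Option (Fin m) → Polynomial k :=
    fun v => v.elim (Polynomial.X * P1) (fun i => MvPolynomial.aeval σ (fX i)) with hτ
  set P2 : Polynomial k := MvPolynomial.aeval τ hY with hP2def
  have hP2 : ∀ y : k, Polynomial.eval y P2 =
      evalAt (fun i => evalAt x y (fX i)) (y * evalAt x y gY) hY := by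
    intro y
    have hfun : (fun v => Polynomial.eval y (τ v)) =
        (fun v : Option (Fin m) => v.elim (y * evalAt x y gY) (fun i => evalAt x y (fX i))) := by
      funext v; cases v <;> simp [hτ, hA, hP1, mul_comm]
    unfold evalAt; rw [hP2def, evalA, hfun]; rfl
  have hQ : Polynomial.X * P1 * P2 = Polynomial.X := by
    apply Polynomial.funext
    intro y
    simp only [Polynomial.eval_mul, Polynomial.eval_X, hP2, hP1, hA]
    exact h y
  have hmul : P1 * P2 = 1 := by
    have hX : (Polynomial.X : Polynomial k) ≠ 0 := Polynomial.X_ne_zero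
    apply mul_left_cancel₀ hX
    rw [← mul_assoc, hQ, mul_one]
  have := congrArg (Polynomial.eval 0) hmul
  simpa [hA, hP2, hP1] using this

/- STATEMENT 12: Suppose moreover that X is irreducible and f = (f_X, y·g_Y) is an
isomorphism with inverse r = (r_X, y·h_Y), also mapping X into itself (model: X = 𝔸^m
over an infinite field, f and r mutually inverse polynomial maps of Z = X × 𝔸¹). Then
for every t — including t = 0 — the maps f_t and r_t are mutually inverse; in
particular the normal derivative f₀ = f_{t=0} is a birational transformation of Z with
inverse r₀. -/
theorem stmt12 (k : Type*) [Field k] [Infinite k] (m : ℕ)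
    (fX rX : Fin m → MvPolynomial (Option (Fin m)) k)
    (gY hY : MvPolynomial (Option (Fin m)) k)
    (hfr : ∀ z, conjFamily fX gY 1 (conjFamily rX hY 1 z) = z)
    (hrf : ∀ z, conjFamily rX hY 1 (conjFamily fX gY 1 z) = z) :
    ∀ t : k, ∀ z : (Fin m → k) × k,
      conjFamily fX gY t (conjFamily rX hY t z) = z ∧
      conjFamily rX hY t (conjFamily fX gY t z) = z := by
  simp only [conjFamily, one_mul, Prod.mk.injEq, Prod.forall] at hfr hrf
  intro t z
  obtain ⟨x, y⟩ := z
  rcases eq_or_ne t 0 with rfl | ht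
  · -- t = 0
    simp only [conjFamily, zero_mul, Prod.mk.injEq]
    have k1 : evalAt x 0 gY * evalAt (fun i => evalAt x 0 (fX i)) 0 hY = 1 :=
      key fX gY hY x (fun y => (hrf x y).2)
    have k2 : evalAt x 0 hY * evalAt (fun i => evalAt x 0 (rX i)) 0 gY = 1 :=
      key rX hY gY x (fun y => (hfr x y).2)
    refine ⟨⟨?_, ?_⟩, ⟨?_, ?_⟩⟩
    · simpa using (hfr x 0).1
    · rw [mul_assoc, k2, mul_one]
    · simpa using (hrf x 0).1
    · rw [mul_assoc, k1, mul_one]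
  · -- t ≠ 0
    simp only [conjFamily, Prod.mk.injEq, ← mul_assoc]
    refine ⟨⟨?_, ?_⟩, ⟨?_, ?_⟩⟩
    · exact (hfr x (t * y)).1
    · exact mul_left_cancel₀ ht (by linear_combination (hfr x (t * y)).2)
    · exact (hrf x (t * y)).1
    · exact mul_left_cancel₀ ht (by linear_combination (hrf x (t * y)).2)
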